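/- With f a short nilpotent in a simple Lie algebra g and the decomposition g((z⁻¹)) = h ⊕ h⊥ where h = Ker ad(f+ze) and h⊥ = Im ad(f+ze), the decomposition is a Z/2Z-grading: [h,h] ⊆ h, [h,h⊥] ⊆ h⊥, and [h⊥,h⊥] ⊆ h. In particular, for v,v₁ ∈ g₁: (i) [[f,v],[f,v₁]] ∈ g₀^f; (ii) [[f,v], ((ad f)²+2z)v₁] ∈ ((ad f)²-2z)g₁; (iii) [((ad f)²+2z)v, ((ad f)²+2z)v₁] ∈ g₀^f. -/

import Mathlib

open scoped TensorProduct

attribute [-instance] HahnSeries.instModule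

set_option maxHeartbeats 1000000

theorem Stmt9Aux.eigzero {F : Type*} [Field F]
    {g : Type*} [LieRing g] [LieAlgebra F g] (x : g)
    (hdec : ∀ y : g, ∃ ym y0 y1 : g, ⁅x, ym⁆ = -ym ∧ ⁅x, y0⁆ = 0 ∧ ⁅x, y1⁆ = y1 ∧
      y = ym + y0 + y1)
    (c : F) (hc : c * c * c ≠ c) (w : g) (hw : ⁅x, w⁆ = c • w) : w = 0 := by
  obtain ⟨ym, y0, y1, hm, h0, h1, hsum⟩ := hdec w
  have h3 : ⁅x, ⁅x, ⁅x, w⁆⁆⁆ = ⁅x, w⁆ := by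
    conv_lhs => rw [hsum]
    conv_rhs => rw [hsum]
    simp [hm, h0, h1]
  rw [hw, lie_smul, hw, smul_smul, lie_smul, hw, smul_smul] at h3
  have h4 : (c * c * c - c) • w = 0 := by rw [sub_smul, h3, sub_self]
  rcases smul_eq_zero.mp h4 with h | h
  · exact absurd (sub_eq_zero.mp h) hc
  · exact h

theorem Stmt9Aux.spanbr {A M : Type*} [Field A] [AddCommMonoid M] [Module A M]
    [Bracket M M]
    (hzl : ∀ b : M, ⁅(0 : M), b⁆ = 0) (hlz : ∀ a : M, ⁅a, (0 : M)⁆ = 0)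
    (hal : ∀ a b c : M, ⁅a + b, c⁆ = ⁅a, c⁆ + ⁅b, c⁆)
    (hla : ∀ a b c : M, ⁅a, b + c⁆ = ⁅a, b⁆ + ⁅a, c⁆)
    (hsl : ∀ (t : A) (a b : M), ⁅t • a, b⁆ = t • ⁅a, b⁆)
    (hls : ∀ (t : A) (a b : M), ⁅a, t • b⁆ = t • ⁅a, b⁆)
    (S T : Set M) (U : Submodule A M) (h : ∀ a ∈ S, ∀ b ∈ T, ⁅a, b⁆ ∈ U) :
    ∀ a ∈ Submodule.span A S, ∀ b ∈ Submodule.span A T, ⁅a, b⁆ ∈ U := by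
  have h1 : ∀ a ∈ S, ∀ b ∈ Submodule.span A T, ⁅a, b⁆ ∈ U := by
    intro a ha b hb
    induction hb using Submodule.span_induction with
    | mem w hw => exact h a ha w hw
    | zero => rw [hlz]; exact U.zero_mem
    | add y z _ _ hy hz => rw [hla]; exact U.add_mem hy hz
    | smul t y _ hy => rw [hls]; exact U.smul_mem t hy
  intro a ha b hb
  induction ha using Submodule.span_induction with
  | mem w hw => exact h1 w hw b hb
  | zero => rw [hzl]; exact U.zero_mem
  | add y z _ _ hy hz => rw [hal]; exact U.add_mem hy hz
  | smul t y _ hy => rw [hsl]; exact U.smul_mem t hy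

set_option maxHeartbeats 10000000 in
/-- For a short nilpotent f, the decomposition g((z⁻¹)) = h ⊕ h⊥, with
h = Ker ad(f+ze) = g₀^f((z⁻¹)) ⊕ ((ad f)²-2z)g₁((z⁻¹)) and
h⊥ = Im ad(f+ze) = [f,g₁]((z⁻¹)) ⊕ ((ad f)²+2z)g₁((z⁻¹)), is a ℤ/2ℤ-grading:
[h,h] ⊆ h, [h,h⊥] ⊆ h⊥, [h⊥,h⊥] ⊆ h.  In particular, for v,v₁ ∈ g₁:
(i) [[f,v],[f,v₁]] ∈ g₀^f; (ii) [[f,v],((ad f)²+2z)v₁] ∈ ((ad f)²-2z)g₁;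
(iii) [((ad f)²+2z)v, ((ad f)²+2z)v₁] ∈ g₀^f((z⁻¹)). -/
theorem stmt9 {F : Type*} [Field F] [CharZero F] [IsAlgClosed F]
    {g : Type*} [LieRing g] [LieAlgebra F g] [FiniteDimensional F g]
    [LieAlgebra.IsSimple F g]
    (e x f : g)
    (hef : ⁅e, f⁆ = (2 : F) • x) (hxe : ⁅x, e⁆ = e) (hxf : ⁅x, f⁆ = -f)
    (hdec : ∀ y : g, ∃ ym y0 y1 : g, ⁅x, ym⁆ = -ym ∧ ⁅x, y0⁆ = 0 ∧ ⁅x, y1⁆ = y1 ∧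
      y = ym + y0 + y1)
    (z : LaurentSeries F) (hz : z = HahnSeries.single (-1) 1)
    (Hk Hr : Submodule (LaurentSeries F) (LaurentSeries F ⊗[F] g))
    (hHk : Hk = Submodule.span (LaurentSeries F)
      ({w | ∃ a : g, ⁅x, a⁆ = 0 ∧ ⁅f, a⁆ = 0 ∧ w = (1 : LaurentSeries F) ⊗ₜ[F] a}
        ∪ {w | ∃ v : g, ⁅x, v⁆ = v ∧
            w = (1 : LaurentSeries F) ⊗ₜ[F] ⁅f, ⁅f, v⁆⁆
              - ((2 : LaurentSeries F) * z) • ((1 : LaurentSeries F) ⊗ₜ[F] v)}))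
    (hHr : Hr = Submodule.span (LaurentSeries F)
      ({w | ∃ v : g, ⁅x, v⁆ = v ∧ w = (1 : LaurentSeries F) ⊗ₜ[F] ⁅f, v⁆}
        ∪ {w | ∃ v : g, ⁅x, v⁆ = v ∧
            w = (1 : LaurentSeries F) ⊗ₜ[F] ⁅f, ⁅f, v⁆⁆
              + ((2 : LaurentSeries F) * z) • ((1 : LaurentSeries F) ⊗ₜ[F] v)})) :
    (∀ a ∈ Hk, ∀ b ∈ Hk, ⁅a, b⁆ ∈ Hk) ∧
    (∀ a ∈ Hk, ∀ b ∈ Hr, ⁅a, b⁆ ∈ Hr) ∧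
    (∀ a ∈ Hr, ∀ b ∈ Hr, ⁅a, b⁆ ∈ Hk) ∧
    (∀ v v₁ : g, ⁅x, v⁆ = v → ⁅x, v₁⁆ = v₁ →
      (⁅x, ⁅⁅f, v⁆, ⁅f, v₁⁆⁆⁆ = 0 ∧ ⁅f, ⁅⁅f, v⁆, ⁅f, v₁⁆⁆⁆ = 0) ∧
      (∃ w : g, ⁅x, w⁆ = w ∧
        ⁅(1 : LaurentSeries F) ⊗ₜ[F] ⁅f, v⁆,
          (1 : LaurentSeries F) ⊗ₜ[F] ⁅f, ⁅f, v₁⁆⁆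
            + ((2 : LaurentSeries F) * z) • ((1 : LaurentSeries F) ⊗ₜ[F] v₁)⁆
        = (1 : LaurentSeries F) ⊗ₜ[F] ⁅f, ⁅f, w⁆⁆
            - ((2 : LaurentSeries F) * z) • ((1 : LaurentSeries F) ⊗ₜ[F] w)) ∧
      ⁅(1 : LaurentSeries F) ⊗ₜ[F] ⁅f, ⁅f, v⁆⁆
          + ((2 : LaurentSeries F) * z) • ((1 : LaurentSeries F) ⊗ₜ[F] v),
        (1 : LaurentSeries F) ⊗ₜ[F] ⁅f, ⁅f, v₁⁆⁆
          + ((2 : LaurentSeries F) * z) • ((1 : LaurentSeries F) ⊗ₜ[F] v₁)⁆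
        ∈ Submodule.span (LaurentSeries F)
            {w | ∃ a : g, ⁅x, a⁆ = 0 ∧ ⁅f, a⁆ = 0 ∧
              w = (1 : LaurentSeries F) ⊗ₜ[F] a}) := by
  -- ==================== g-level lemmas ====================
  have g1e : ∀ v : g, ⁅x, v⁆ = v → ⁅e, v⁆ = 0 := fun v hv =>
    Stmt9Aux.eigzero x hdec (2 : F) (by norm_num) _ (by rw [leibniz_lie, hxe, hv]; module)
  have g1g1 : ∀ v v₁ : g, ⁅x, v⁆ = v → ⁅x, v₁⁆ = v₁ → ⁅v, v₁⁆ = 0 := fun v v₁ hv hv₁ =>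
    Stmt9Aux.eigzero x hdec (2 : F) (by norm_num) _ (by rw [leibniz_lie, hv, hv₁]; module)
  have gm1f : ∀ b : g, ⁅x, b⁆ = -b → ⁅f, b⁆ = 0 := fun b hb =>
    Stmt9Aux.eigzero x hdec (-2 : F) (by norm_num) _ (by
      rw [leibniz_lie, hxf, hb, neg_lie, lie_neg]; module)
  have gm1gm1 : ∀ b b₁ : g, ⁅x, b⁆ = -b → ⁅x, b₁⁆ = -b₁ → ⁅b, b₁⁆ = 0 := fun b b₁ hb hb₁ =>
    Stmt9Aux.eigzero x hdec (-2 : F) (by norm_num) _ (by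
      rw [leibniz_lie, hb, hb₁, neg_lie, lie_neg]; module)
  have xfv : ∀ v : g, ⁅x, v⁆ = v → ⁅x, ⁅f, v⁆⁆ = 0 := fun v hv => by
    rw [leibniz_lie, hxf, hv, neg_lie, neg_add_cancel]
  have xffv : ∀ v : g, ⁅x, v⁆ = v → ⁅x, ⁅f, ⁅f, v⁆⁆⁆ = -⁅f, ⁅f, v⁆⁆ := fun v hv => by
    rw [leibniz_lie, hxf, xfv v hv, lie_zero, add_zero, neg_lie]
  have efv : ∀ v : g, ⁅x, v⁆ = v → ⁅e, ⁅f, v⁆⁆ = (2 : F) • v := fun v hv => by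
    rw [leibniz_lie, hef, g1e v hv, lie_zero, add_zero, smul_lie, hv]
  have effv : ∀ v : g, ⁅x, v⁆ = v → ⁅e, ⁅f, ⁅f, v⁆⁆⁆ = (2 : F) • ⁅f, v⁆ := fun v hv => by
    rw [leibniz_lie, hef, efv v hv, lie_smul, smul_lie, xfv v hv, smul_zero, zero_add]
  have frec : ∀ b : g, ⁅x, b⁆ = -b → ⁅f, ⁅e, b⁆⁆ = (2 : F) • b := fun b hb => by
    have h1 : ⁅f, e⁆ = -((2 : F) • x) := by rw [← hef, ← lie_skew]
    rw [leibniz_lie, h1, gm1f b hb, lie_zero, add_zero, neg_lie, smul_lie, hb,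
      smul_neg, neg_neg]
  have gm1ext : ∀ b b₁ : g, ⁅x, b⁆ = -b → ⁅x, b₁⁆ = -b₁ → ⁅e, b⁆ = ⁅e, b₁⁆ → b = b₁ := by
    intro b b₁ hb hb₁ h
    have h1 := frec b hb
    rw [h, frec b₁ hb₁] at h1
    exact (smul_right_injective g (by norm_num : (2:F) ≠ 0) h1).symm
  have L4 : ∀ v v₁ : g, ⁅x, v⁆ = v → ⁅x, v₁⁆ = v₁ → ⁅⁅f, v⁆, v₁⁆ = -⁅v, ⁅f, v₁⁆⁆ := by
    intro v v₁ hv hv₁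
    have h := leibniz_lie f v v₁
    rw [g1g1 v v₁ hv hv₁, lie_zero] at h
    exact eq_neg_of_add_eq_zero_left h.symm
  have vFF : ∀ v v₁ : g, ⁅v, ⁅f, ⁅f, v₁⁆⁆⁆ = -⁅⁅f, v⁆, ⁅f, v₁⁆⁆ + ⁅f, ⁅v, ⁅f, v₁⁆⁆⁆ := by
    intro v v₁
    have h := leibniz_lie v f ⁅f, v₁⁆
    rw [show ⁅v, f⁆ = -⁅f, v⁆ from by rw [← lie_skew]] at h
    rw [h, neg_lie]
  have xg1g0 : ∀ w v : g, ⁅x, w⁆ = 0 → ⁅x, v⁆ = v → ⁅x, ⁅w, v⁆⁆ = ⁅w, v⁆ := by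
    intro w v hw hv; rw [leibniz_lie, hw, zero_lie, zero_add, hv]
  have xg1g0' : ∀ v w : g, ⁅x, v⁆ = v → ⁅x, w⁆ = 0 → ⁅x, ⁅v, w⁆⁆ = ⁅v, w⁆ := by
    intro v w hv hw; rw [leibniz_lie, hv, hw, lie_zero, add_zero]
  have xg0g0 : ∀ w v : g, ⁅x, w⁆ = 0 → ⁅x, v⁆ = 0 → ⁅x, ⁅w, v⁆⁆ = 0 := by
    intro w v hw hv; rw [leibniz_lie, hw, zero_lie, zero_add, hv, lie_zero]
  have acomf : ∀ a w : g, ⁅f, a⁆ = 0 → ⁅a, ⁅f, w⁆⁆ = ⁅f, ⁅a, w⁆⁆ := by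
    intro a w ha
    rw [leibniz_lie, show ⁅a, f⁆ = 0 from by rw [← lie_skew, ha, neg_zero], zero_lie,
      zero_add]
  have g0f0 : ∀ a a₁ : g, ⁅f, a⁆ = 0 → ⁅f, a₁⁆ = 0 → ⁅f, ⁅a, a₁⁆⁆ = 0 := by
    intro a a₁ ha ha₁
    rw [leibniz_lie, ha, ha₁, zero_lie, lie_zero, add_zero]
  -- L5
  have L5 : ∀ v v₁ : g, ⁅x, v⁆ = v → ⁅x, v₁⁆ = v₁ →
      ⁅⁅f, v⁆, ⁅f, ⁅f, v₁⁆⁆⁆ = -⁅f, ⁅f, ⁅⁅f, v⁆, v₁⁆⁆⁆ := by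
    intro v v₁ hv hv₁
    have hm : ⁅x, ⁅⁅f, v⁆, v₁⁆⁆ = ⁅⁅f, v⁆, v₁⁆ := xg1g0 _ _ (xfv v hv) hv₁
    apply gm1ext
    · rw [leibniz_lie, xfv v hv, zero_lie, zero_add, xffv v₁ hv₁, lie_neg]
    · rw [lie_neg, xffv _ hm]
    · rw [leibniz_lie e ⁅f, v⁆, efv v hv, effv v₁ hv₁, smul_lie, lie_smul,
        lie_neg, effv _ hm, vFF v v₁, L4 v v₁ hv hv₁, lie_neg]
      module
  -- FFu : ⁅F²v, u₁⁆ = F²⁅u,v₁⁆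
  have hUV : ∀ v v₁ : g, ⁅x, v⁆ = v → ⁅x, v₁⁆ = v₁ →
      ⁅⁅f, v₁⁆, v⁆ = ⁅⁅f, v⁆, v₁⁆ := by
    intro v v₁ hv hv₁
    exact (L4 v₁ v hv₁ hv).trans (lie_skew ⁅f, v⁆ v₁)
  have FFu : ∀ v v₁ : g, ⁅x, v⁆ = v → ⁅x, v₁⁆ = v₁ →
      ⁅⁅f, ⁅f, v⁆⁆, ⁅f, v₁⁆⁆ = ⁅f, ⁅f, ⁅⁅f, v⁆, v₁⁆⁆⁆ := by
    intro v v₁ hv hv₁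
    have h1 : ⁅⁅f, v₁⁆, ⁅f, ⁅f, v⁆⁆⁆ = -⁅f, ⁅f, ⁅⁅f, v₁⁆, v⁆⁆⁆ := L5 v₁ v hv₁ hv
    rw [hUV v v₁ hv hv₁] at h1
    rw [← lie_skew, h1, neg_neg]
  -- L6
  have L6 : ∀ v v₁ : g, ⁅x, v⁆ = v → ⁅x, v₁⁆ = v₁ →
      ⁅f, ⁅⁅f, v⁆, ⁅f, v₁⁆⁆⁆ = 0 := by
    intro v v₁ hv hv₁
    rw [leibniz_lie, FFu v v₁ hv hv₁, L5 v v₁ hv hv₁, add_neg_cancel]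
  -- hS0 : ⁅F²v, v₁⁆ = -⁅u,u₁⁆ - ⁅f,⁅v,u₁⁆⁆
  have hS0 : ∀ v v₁ : g, ⁅x, v⁆ = v → ⁅x, v₁⁆ = v₁ →
      ⁅⁅f, ⁅f, v⁆⁆, v₁⁆ = -⁅⁅f, v⁆, ⁅f, v₁⁆⁆ - ⁅f, ⁅v, ⁅f, v₁⁆⁆⁆ := by
    intro v v₁ hv hv₁
    have h2 : ⁅v₁, ⁅f, v⁆⁆ = ⁅v, ⁅f, v₁⁆⁆ := neg_inj.mp
      ((L4 v₁ v hv₁ hv).symm.trans ((hUV v v₁ hv hv₁).trans (L4 v v₁ hv hv₁)))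
    have h3 : ⁅⁅f, v₁⁆, ⁅f, v⁆⁆ = -⁅⁅f, v⁆, ⁅f, v₁⁆⁆ := (lie_skew ⁅f, v₁⁆ ⁅f, v⁆).symm
    have h1 := vFF v₁ v
    rw [h2, h3] at h1
    rw [← lie_skew, h1]
    module
  have hS : ∀ v v₁ : g, ⁅x, v⁆ = v → ⁅x, v₁⁆ = v₁ →
      ⁅⁅f, ⁅f, v⁆⁆, v₁⁆ + ⁅v, ⁅f, ⁅f, v₁⁆⁆⁆ = (-2 : F) • ⁅⁅f, v⁆, ⁅f, v₁⁆⁆ := by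
    intro v v₁ hv hv₁
    rw [hS0 v v₁ hv hv₁, vFF v v₁]
    module
  have hT : ∀ v v₁ : g, ⁅x, v⁆ = v → ⁅x, v₁⁆ = v₁ →
      ⁅⁅f, ⁅f, v⁆⁆, v₁⁆ - ⁅v, ⁅f, ⁅f, v₁⁆⁆⁆ = ⁅f, (-2 : F) • ⁅v, ⁅f, v₁⁆⁆⁆ := by
    intro v v₁ hv hv₁
    rw [hS0 v v₁ hv hv₁, vFF v v₁, lie_smul]
    module
  -- ==================== tensor-level helpers ====================
  have addlie : ∀ p q r : LaurentSeries F ⊗[F] g, ⁅p + q, r⁆ = ⁅p, r⁆ + ⁅q, r⁆ :=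
    fun p q r => add_lie p q r
  have lieadd : ∀ p q r : LaurentSeries F ⊗[F] g, ⁅p, q + r⁆ = ⁅p, q⁆ + ⁅p, r⁆ :=
    fun p q r => lie_add p q r
  have smullie : ∀ (t : LaurentSeries F) (p q : LaurentSeries F ⊗[F] g),
      ⁅t • p, q⁆ = t • ⁅p, q⁆ := fun t p q => smul_lie t p q
  have liesmul : ∀ (t : LaurentSeries F) (p q : LaurentSeries F ⊗[F] g),
      ⁅p, t • q⁆ = t • ⁅p, q⁆ := fun t p q => lie_smul t p q
  have zerolie : ∀ p : LaurentSeries F ⊗[F] g, ⁅(0 : LaurentSeries F ⊗[F] g), p⁆ = 0 := by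
    intro p
    have h := addlie 0 0 p
    rw [add_zero] at h
    exact left_eq_add.mp h
  have liezero : ∀ p : LaurentSeries F ⊗[F] g, ⁅p, (0 : LaurentSeries F ⊗[F] g)⁆ = 0 := by
    intro p
    have h := lieadd p 0 0
    rw [add_zero] at h
    exact left_eq_add.mp h
  have lieskew : ∀ p q : LaurentSeries F ⊗[F] g, ⁅p, q⁆ = -⁅q, p⁆ :=
    fun p q => (lie_skew p q).symm
  have smulsmul : ∀ (s t : LaurentSeries F) (p : LaurentSeries F ⊗[F] g),
      s • t • p = (s * t) • p := fun s t p => smul_smul s t p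
  have smulneg : ∀ (t : LaurentSeries F) (p : LaurentSeries F ⊗[F] g),
      t • -p = -(t • p) := fun t p => smul_neg t p
  have negsmul : ∀ (t : LaurentSeries F) (p : LaurentSeries F ⊗[F] g),
      (-t) • p = -(t • p) := fun t p => neg_smul t p
  have smuladd : ∀ (t : LaurentSeries F) (p q : LaurentSeries F ⊗[F] g),
      t • (p + q) = t • p + t • q := fun t p q => smul_add t p q
  have smulzero : ∀ t : LaurentSeries F, t • (0 : LaurentSeries F ⊗[F] g) = 0 :=
    fun t => smul_zero t
  have tb : ∀ a b : g, ⁅(1 : LaurentSeries F) ⊗ₜ[F] a, (1 : LaurentSeries F) ⊗ₜ[F] b⁆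
      = (1 : LaurentSeries F) ⊗ₜ[F] ⁅a, b⁆ := fun a b => by
    rw [LieAlgebra.ExtendScalars.bracket_tmul, one_mul]
  have texp0l : ∀ (t : LaurentSeries F) (a c d : g),
      ⁅(1 : LaurentSeries F) ⊗ₜ[F] a,
        (1 : LaurentSeries F) ⊗ₜ[F] c + t • ((1 : LaurentSeries F) ⊗ₜ[F] d)⁆
      = (1 : LaurentSeries F) ⊗ₜ[F] ⁅a, c⁆
        + t • ((1 : LaurentSeries F) ⊗ₜ[F] ⁅a, d⁆) := by
    intro t a c d
    rw [lieadd, liesmul, tb, tb]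
  have texp0r : ∀ (s : LaurentSeries F) (a b c : g),
      ⁅(1 : LaurentSeries F) ⊗ₜ[F] a + s • ((1 : LaurentSeries F) ⊗ₜ[F] b),
        (1 : LaurentSeries F) ⊗ₜ[F] c⁆
      = (1 : LaurentSeries F) ⊗ₜ[F] ⁅a, c⁆
        + s • ((1 : LaurentSeries F) ⊗ₜ[F] ⁅b, c⁆) := by
    intro s a b c
    rw [addlie, smullie, tb, tb]
  have texp : ∀ (s t : LaurentSeries F) (a b c d : g),
      ⁅(1 : LaurentSeries F) ⊗ₜ[F] a + s • ((1 : LaurentSeries F) ⊗ₜ[F] b),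
        (1 : LaurentSeries F) ⊗ₜ[F] c + t • ((1 : LaurentSeries F) ⊗ₜ[F] d)⁆
      = (1 : LaurentSeries F) ⊗ₜ[F] ⁅a, c⁆
        + t • ((1 : LaurentSeries F) ⊗ₜ[F] ⁅a, d⁆)
        + s • ((1 : LaurentSeries F) ⊗ₜ[F] ⁅b, c⁆)
        + (s * t) • ((1 : LaurentSeries F) ⊗ₜ[F] ⁅b, d⁆) := by
    intro s t a b c d
    rw [addlie, lieadd, lieadd, liesmul, smullie, smullie, liesmul, smulsmul,
      tb, tb, tb, tb]
    abel
  -- ==================== generator bracket membership ====================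
  have eqPR : ∀ v v₁ : g, ⁅x, v⁆ = v → ⁅x, v₁⁆ = v₁ →
      ⁅(1 : LaurentSeries F) ⊗ₜ[F] ⁅f, v⁆, (1 : LaurentSeries F) ⊗ₜ[F] ⁅f, ⁅f, v₁⁆⁆ + ((2 : LaurentSeries F) * z) • ((1 : LaurentSeries F) ⊗ₜ[F] v₁)⁆
      = (1 : LaurentSeries F) ⊗ₜ[F] ⁅f, ⁅f, ⁅v, ⁅f, v₁⁆⁆⁆⁆ - ((2 : LaurentSeries F) * z) • ((1 : LaurentSeries F) ⊗ₜ[F] ⁅v, ⁅f, v₁⁆⁆) := by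
    intro v v₁ hv hv₁
    rw [texp0l, L5 v v₁ hv hv₁, L4 v v₁ hv hv₁, lie_neg, lie_neg, neg_neg,
      TensorProduct.tmul_neg, smulneg, ← sub_eq_add_neg]
  have memPR : ∀ v v₁ : g, ⁅x, v⁆ = v → ⁅x, v₁⁆ = v₁ →
      ⁅(1 : LaurentSeries F) ⊗ₜ[F] ⁅f, v⁆, (1 : LaurentSeries F) ⊗ₜ[F] ⁅f, ⁅f, v₁⁆⁆ + ((2 : LaurentSeries F) * z) • ((1 : LaurentSeries F) ⊗ₜ[F] v₁)⁆
      ∈ Submodule.span (LaurentSeries F) ({w | ∃ a : g, ⁅x, a⁆ = 0 ∧ ⁅f, a⁆ = 0 ∧ w = (1 : LaurentSeries F) ⊗ₜ[F] a} ∪ {w | ∃ v : g, ⁅x, v⁆ = v ∧ w = (1 : LaurentSeries F) ⊗ₜ[F] ⁅f, ⁅f, v⁆⁆ - ((2 : LaurentSeries F) * z) • ((1 : LaurentSeries F) ⊗ₜ[F] v)}) := by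
    intro v v₁ hv hv₁
    rw [eqPR v v₁ hv hv₁]
    exact Submodule.subset_span (Set.mem_union_right _
      ⟨⁅v, ⁅f, v₁⁆⁆, xg1g0' v ⁅f, v₁⁆ hv (xfv v₁ hv₁), rfl⟩)
  have memRR : ∀ v v₁ : g, ⁅x, v⁆ = v → ⁅x, v₁⁆ = v₁ →
      ⁅(1 : LaurentSeries F) ⊗ₜ[F] ⁅f, ⁅f, v⁆⁆ + ((2 : LaurentSeries F) * z) • ((1 : LaurentSeries F) ⊗ₜ[F] v),
        (1 : LaurentSeries F) ⊗ₜ[F] ⁅f, ⁅f, v₁⁆⁆ + ((2 : LaurentSeries F) * z) • ((1 : LaurentSeries F) ⊗ₜ[F] v₁)⁆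
      ∈ Submodule.span (LaurentSeries F) {w | ∃ a : g, ⁅x, a⁆ = 0 ∧ ⁅f, a⁆ = 0 ∧ w = (1 : LaurentSeries F) ⊗ₜ[F] a} := by
    intro v v₁ hv hv₁
    rw [texp, gm1gm1 _ _ (xffv v hv) (xffv v₁ hv₁), g1g1 v v₁ hv hv₁]
    simp only [TensorProduct.tmul_zero, smulzero, zero_add, add_zero]
    rw [← smuladd, ← TensorProduct.tmul_add]
    refine Submodule.smul_mem _ _ (Submodule.subset_span ⟨_, ?_, ?_, rfl⟩)
    · rw [hS v v₁ hv hv₁, lie_smul, xg0g0 _ _ (xfv v hv) (xfv v₁ hv₁), smul_zero]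
    · rw [hS v v₁ hv hv₁, lie_smul, L6 v v₁ hv hv₁, smul_zero]
  have memKK : ∀ v v₁ : g, ⁅x, v⁆ = v → ⁅x, v₁⁆ = v₁ →
      ⁅(1 : LaurentSeries F) ⊗ₜ[F] ⁅f, ⁅f, v⁆⁆ - ((2 : LaurentSeries F) * z) • ((1 : LaurentSeries F) ⊗ₜ[F] v),
        (1 : LaurentSeries F) ⊗ₜ[F] ⁅f, ⁅f, v₁⁆⁆ - ((2 : LaurentSeries F) * z) • ((1 : LaurentSeries F) ⊗ₜ[F] v₁)⁆
      ∈ Submodule.span (LaurentSeries F) ({w | ∃ a : g, ⁅x, a⁆ = 0 ∧ ⁅f, a⁆ = 0 ∧ w = (1 : LaurentSeries F) ⊗ₜ[F] a} ∪ {w | ∃ v : g, ⁅x, v⁆ = v ∧ w = (1 : LaurentSeries F) ⊗ₜ[F] ⁅f, ⁅f, v⁆⁆ - ((2 : LaurentSeries F) * z) • ((1 : LaurentSeries F) ⊗ₜ[F] v)}) := by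
    intro v v₁ hv hv₁
    simp only [sub_eq_add_neg]
    simp only [← negsmul]
    rw [texp, gm1gm1 _ _ (xffv v hv) (xffv v₁ hv₁), g1g1 v v₁ hv hv₁]
    simp only [TensorProduct.tmul_zero, smulzero, zero_add, add_zero]
    rw [← smuladd, ← TensorProduct.tmul_add]
    refine Submodule.smul_mem _ _
      (Submodule.subset_span (Set.mem_union_left _ ⟨_, ?_, ?_, rfl⟩))
    · rw [hS v v₁ hv hv₁, lie_smul, xg0g0 _ _ (xfv v hv) (xfv v₁ hv₁), smul_zero]
    · rw [hS v v₁ hv hv₁, lie_smul, L6 v v₁ hv hv₁, smul_zero]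
  have memAK : ∀ a v : g, ⁅x, a⁆ = 0 → ⁅f, a⁆ = 0 → ⁅x, v⁆ = v →
      ⁅(1 : LaurentSeries F) ⊗ₜ[F] a, (1 : LaurentSeries F) ⊗ₜ[F] ⁅f, ⁅f, v⁆⁆ - ((2 : LaurentSeries F) * z) • ((1 : LaurentSeries F) ⊗ₜ[F] v)⁆
      ∈ Submodule.span (LaurentSeries F) ({w | ∃ a : g, ⁅x, a⁆ = 0 ∧ ⁅f, a⁆ = 0 ∧ w = (1 : LaurentSeries F) ⊗ₜ[F] a} ∪ {w | ∃ v : g, ⁅x, v⁆ = v ∧ w = (1 : LaurentSeries F) ⊗ₜ[F] ⁅f, ⁅f, v⁆⁆ - ((2 : LaurentSeries F) * z) • ((1 : LaurentSeries F) ⊗ₜ[F] v)}) := by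
    intro a v hxa hfa hv
    simp only [sub_eq_add_neg]
    simp only [← negsmul]
    rw [texp0l, acomf a ⁅f, v⁆ hfa, acomf a v hfa]
    exact Submodule.subset_span (Set.mem_union_right _
      ⟨⁅a, v⁆, xg1g0 a v hxa hv, rfl⟩)
  -- ==================== the four conjuncts ====================
  refine ⟨?_, ?_, ?_, ?_⟩
  · -- [Hk, Hk] ⊆ Hk
    rw [hHk]
    have hgen : ∀ p ∈ ({w | ∃ a : g, ⁅x, a⁆ = 0 ∧ ⁅f, a⁆ = 0 ∧ w = (1 : LaurentSeries F) ⊗ₜ[F] a}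
        ∪ {w | ∃ v : g, ⁅x, v⁆ = v ∧ w = (1 : LaurentSeries F) ⊗ₜ[F] ⁅f, ⁅f, v⁆⁆ - ((2 : LaurentSeries F) * z) • ((1 : LaurentSeries F) ⊗ₜ[F] v)}),
        ∀ q ∈ ({w | ∃ a : g, ⁅x, a⁆ = 0 ∧ ⁅f, a⁆ = 0 ∧ w = (1 : LaurentSeries F) ⊗ₜ[F] a}
        ∪ {w | ∃ v : g, ⁅x, v⁆ = v ∧ w = (1 : LaurentSeries F) ⊗ₜ[F] ⁅f, ⁅f, v⁆⁆ - ((2 : LaurentSeries F) * z) • ((1 : LaurentSeries F) ⊗ₜ[F] v)}),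
        ⁅p, q⁆ ∈ Submodule.span (LaurentSeries F) ({w | ∃ a : g, ⁅x, a⁆ = 0 ∧ ⁅f, a⁆ = 0 ∧ w = (1 : LaurentSeries F) ⊗ₜ[F] a}
        ∪ {w | ∃ v : g, ⁅x, v⁆ = v ∧ w = (1 : LaurentSeries F) ⊗ₜ[F] ⁅f, ⁅f, v⁆⁆ - ((2 : LaurentSeries F) * z) • ((1 : LaurentSeries F) ⊗ₜ[F] v)}) := by
      intro p hp q hq
      rcases hp with ⟨a, hxa, hfa, rfl⟩ | ⟨v, hv, rfl⟩
      · rcases hq with ⟨a₁, hxa₁, hfa₁, rfl⟩ | ⟨v₁, hv₁, rfl⟩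
        · rw [tb]
          exact Submodule.subset_span (Set.mem_union_left _
            ⟨⁅a, a₁⁆, xg0g0 a a₁ hxa hxa₁, g0f0 a a₁ hfa hfa₁, rfl⟩)
        · exact memAK a v₁ hxa hfa hv₁
      · rcases hq with ⟨a₁, hxa₁, hfa₁, rfl⟩ | ⟨v₁, hv₁, rfl⟩
        · rw [lieskew]
          exact Submodule.neg_mem _ (memAK a₁ v hxa₁ hfa₁ hv)
        · exact memKK v v₁ hv hv₁
    have h1 : ∀ p ∈ ({w | ∃ a : g, ⁅x, a⁆ = 0 ∧ ⁅f, a⁆ = 0 ∧ w = (1 : LaurentSeries F) ⊗ₜ[F] a}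
        ∪ {w | ∃ v : g, ⁅x, v⁆ = v ∧ w = (1 : LaurentSeries F) ⊗ₜ[F] ⁅f, ⁅f, v⁆⁆ - ((2 : LaurentSeries F) * z) • ((1 : LaurentSeries F) ⊗ₜ[F] v)}),
        ∀ q ∈ Submodule.span (LaurentSeries F) ({w | ∃ a : g, ⁅x, a⁆ = 0 ∧ ⁅f, a⁆ = 0 ∧ w = (1 : LaurentSeries F) ⊗ₜ[F] a}
        ∪ {w | ∃ v : g, ⁅x, v⁆ = v ∧ w = (1 : LaurentSeries F) ⊗ₜ[F] ⁅f, ⁅f, v⁆⁆ - ((2 : LaurentSeries F) * z) • ((1 : LaurentSeries F) ⊗ₜ[F] v)}),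
        ⁅p, q⁆ ∈ Submodule.span (LaurentSeries F) ({w | ∃ a : g, ⁅x, a⁆ = 0 ∧ ⁅f, a⁆ = 0 ∧ w = (1 : LaurentSeries F) ⊗ₜ[F] a}
        ∪ {w | ∃ v : g, ⁅x, v⁆ = v ∧ w = (1 : LaurentSeries F) ⊗ₜ[F] ⁅f, ⁅f, v⁆⁆ - ((2 : LaurentSeries F) * z) • ((1 : LaurentSeries F) ⊗ₜ[F] v)}) := by
      intro p hp q hq
      induction hq using Submodule.span_induction with
      | mem w hw => exact hgen p hp w hw
      | zero => rw [liezero]; exact Submodule.zero_mem _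
      | add y w _ _ hy hw => rw [lieadd]; exact Submodule.add_mem _ hy hw
      | smul t y _ hy => rw [liesmul]; exact Submodule.smul_mem _ t hy
    intro p hp q hq
    induction hp using Submodule.span_induction with
    | mem w hw => exact h1 w hw q hq
    | zero => rw [zerolie]; exact Submodule.zero_mem _
    | add y w _ _ hy hw => rw [addlie]; exact Submodule.add_mem _ hy hw
    | smul t y _ hy => rw [smullie]; exact Submodule.smul_mem _ t hy
  · -- [Hk, Hr] ⊆ Hr
    rw [hHk, hHr]
    have hgen : ∀ p ∈ ({w | ∃ a : g, ⁅x, a⁆ = 0 ∧ ⁅f, a⁆ = 0 ∧ w = (1 : LaurentSeries F) ⊗ₜ[F] a}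
        ∪ {w | ∃ v : g, ⁅x, v⁆ = v ∧ w = (1 : LaurentSeries F) ⊗ₜ[F] ⁅f, ⁅f, v⁆⁆ - ((2 : LaurentSeries F) * z) • ((1 : LaurentSeries F) ⊗ₜ[F] v)}),
        ∀ q ∈ ({w | ∃ v : g, ⁅x, v⁆ = v ∧ w = (1 : LaurentSeries F) ⊗ₜ[F] ⁅f, v⁆}
        ∪ {w | ∃ v : g, ⁅x, v⁆ = v ∧ w = (1 : LaurentSeries F) ⊗ₜ[F] ⁅f, ⁅f, v⁆⁆ + ((2 : LaurentSeries F) * z) • ((1 : LaurentSeries F) ⊗ₜ[F] v)}),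
        ⁅p, q⁆ ∈ Submodule.span (LaurentSeries F) ({w | ∃ v : g, ⁅x, v⁆ = v ∧ w = (1 : LaurentSeries F) ⊗ₜ[F] ⁅f, v⁆}
        ∪ {w | ∃ v : g, ⁅x, v⁆ = v ∧ w = (1 : LaurentSeries F) ⊗ₜ[F] ⁅f, ⁅f, v⁆⁆ + ((2 : LaurentSeries F) * z) • ((1 : LaurentSeries F) ⊗ₜ[F] v)}) := by
      intro p hp q hq
      rcases hp with ⟨a, hxa, hfa, rfl⟩ | ⟨v, hv, rfl⟩
      · rcases hq with ⟨v₁, hv₁, rfl⟩ | ⟨v₁, hv₁, rfl⟩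
        · rw [tb, acomf a v₁ hfa]
          exact Submodule.subset_span (Set.mem_union_left _
            ⟨⁅a, v₁⁆, xg1g0 a v₁ hxa hv₁, rfl⟩)
        · rw [texp0l, acomf a ⁅f, v₁⁆ hfa, acomf a v₁ hfa]
          exact Submodule.subset_span (Set.mem_union_right _
            ⟨⁅a, v₁⁆, xg1g0 a v₁ hxa hv₁, rfl⟩)
      · rcases hq with ⟨v₁, hv₁, rfl⟩ | ⟨v₁, hv₁, rfl⟩
        · simp only [sub_eq_add_neg]
          simp only [← negsmul]
          rw [texp0r, FFu v v₁ hv hv₁]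
          have h2 : ⁅v, ⁅f, v₁⁆⁆ = -⁅⁅f, v⁆, v₁⁆ := by rw [L4 v v₁ hv hv₁, neg_neg]
          rw [h2, TensorProduct.tmul_neg, smulneg, negsmul, neg_neg]
          exact Submodule.subset_span (Set.mem_union_right _
            ⟨⁅⁅f, v⁆, v₁⁆, xg1g0 _ _ (xfv v hv) hv₁, rfl⟩)
        · simp only [sub_eq_add_neg]
          simp only [← negsmul]
          rw [texp, gm1gm1 _ _ (xffv v hv) (xffv v₁ hv₁), g1g1 v v₁ hv hv₁]
          simp only [TensorProduct.tmul_zero, smulzero, zero_add, add_zero]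
          rw [negsmul, ← smulneg, ← TensorProduct.tmul_neg, ← smuladd,
            ← TensorProduct.tmul_add, ← sub_eq_add_neg, hT v v₁ hv hv₁]
          refine Submodule.smul_mem _ _ (Submodule.subset_span (Set.mem_union_left _
            ⟨(-2 : F) • ⁅v, ⁅f, v₁⁆⁆, ?_, rfl⟩))
          rw [lie_smul, xg1g0' v ⁅f, v₁⁆ hv (xfv v₁ hv₁)]
    have h1 : ∀ p ∈ ({w | ∃ a : g, ⁅x, a⁆ = 0 ∧ ⁅f, a⁆ = 0 ∧ w = (1 : LaurentSeries F) ⊗ₜ[F] a}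
        ∪ {w | ∃ v : g, ⁅x, v⁆ = v ∧ w = (1 : LaurentSeries F) ⊗ₜ[F] ⁅f, ⁅f, v⁆⁆ - ((2 : LaurentSeries F) * z) • ((1 : LaurentSeries F) ⊗ₜ[F] v)}),
        ∀ q ∈ Submodule.span (LaurentSeries F) ({w | ∃ v : g, ⁅x, v⁆ = v ∧ w = (1 : LaurentSeries F) ⊗ₜ[F] ⁅f, v⁆}
        ∪ {w | ∃ v : g, ⁅x, v⁆ = v ∧ w = (1 : LaurentSeries F) ⊗ₜ[F] ⁅f, ⁅f, v⁆⁆ + ((2 : LaurentSeries F) * z) • ((1 : LaurentSeries F) ⊗ₜ[F] v)}),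
        ⁅p, q⁆ ∈ Submodule.span (LaurentSeries F) ({w | ∃ v : g, ⁅x, v⁆ = v ∧ w = (1 : LaurentSeries F) ⊗ₜ[F] ⁅f, v⁆}
        ∪ {w | ∃ v : g, ⁅x, v⁆ = v ∧ w = (1 : LaurentSeries F) ⊗ₜ[F] ⁅f, ⁅f, v⁆⁆ + ((2 : LaurentSeries F) * z) • ((1 : LaurentSeries F) ⊗ₜ[F] v)}) := by
      intro p hp q hq
      induction hq using Submodule.span_induction with
      | mem w hw => exact hgen p hp w hw
      | zero => rw [liezero]; exact Submodule.zero_mem _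
      | add y w _ _ hy hw => rw [lieadd]; exact Submodule.add_mem _ hy hw
      | smul t y _ hy => rw [liesmul]; exact Submodule.smul_mem _ t hy
    intro p hp q hq
    induction hp using Submodule.span_induction with
    | mem w hw => exact h1 w hw q hq
    | zero => rw [zerolie]; exact Submodule.zero_mem _
    | add y w _ _ hy hw => rw [addlie]; exact Submodule.add_mem _ hy hw
    | smul t y _ hy => rw [smullie]; exact Submodule.smul_mem _ t hy
  · -- [Hr, Hr] ⊆ Hk
    rw [hHr, hHk]
    have hgen : ∀ p ∈ ({w | ∃ v : g, ⁅x, v⁆ = v ∧ w = (1 : LaurentSeries F) ⊗ₜ[F] ⁅f, v⁆}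
        ∪ {w | ∃ v : g, ⁅x, v⁆ = v ∧ w = (1 : LaurentSeries F) ⊗ₜ[F] ⁅f, ⁅f, v⁆⁆ + ((2 : LaurentSeries F) * z) • ((1 : LaurentSeries F) ⊗ₜ[F] v)}),
        ∀ q ∈ ({w | ∃ v : g, ⁅x, v⁆ = v ∧ w = (1 : LaurentSeries F) ⊗ₜ[F] ⁅f, v⁆}
        ∪ {w | ∃ v : g, ⁅x, v⁆ = v ∧ w = (1 : LaurentSeries F) ⊗ₜ[F] ⁅f, ⁅f, v⁆⁆ + ((2 : LaurentSeries F) * z) • ((1 : LaurentSeries F) ⊗ₜ[F] v)}),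
        ⁅p, q⁆ ∈ Submodule.span (LaurentSeries F) ({w | ∃ a : g, ⁅x, a⁆ = 0 ∧ ⁅f, a⁆ = 0 ∧ w = (1 : LaurentSeries F) ⊗ₜ[F] a}
        ∪ {w | ∃ v : g, ⁅x, v⁆ = v ∧ w = (1 : LaurentSeries F) ⊗ₜ[F] ⁅f, ⁅f, v⁆⁆ - ((2 : LaurentSeries F) * z) • ((1 : LaurentSeries F) ⊗ₜ[F] v)}) := by
      intro p hp q hq
      rcases hp with ⟨v, hv, rfl⟩ | ⟨v, hv, rfl⟩
      · rcases hq with ⟨v₁, hv₁, rfl⟩ | ⟨v₁, hv₁, rfl⟩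
        · rw [tb]
          exact Submodule.subset_span (Set.mem_union_left _
            ⟨⁅⁅f, v⁆, ⁅f, v₁⁆⁆, xg0g0 _ _ (xfv v hv) (xfv v₁ hv₁), L6 v v₁ hv hv₁, rfl⟩)
        · exact memPR v v₁ hv hv₁
      · rcases hq with ⟨v₁, hv₁, rfl⟩ | ⟨v₁, hv₁, rfl⟩
        · rw [lieskew]
          exact Submodule.neg_mem _ (memPR v₁ v hv₁ hv)
        · exact Submodule.span_mono Set.subset_union_left (memRR v v₁ hv hv₁)
    have h1 : ∀ p ∈ ({w | ∃ v : g, ⁅x, v⁆ = v ∧ w = (1 : LaurentSeries F) ⊗ₜ[F] ⁅f, v⁆}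
        ∪ {w | ∃ v : g, ⁅x, v⁆ = v ∧ w = (1 : LaurentSeries F) ⊗ₜ[F] ⁅f, ⁅f, v⁆⁆ + ((2 : LaurentSeries F) * z) • ((1 : LaurentSeries F) ⊗ₜ[F] v)}),
        ∀ q ∈ Submodule.span (LaurentSeries F) ({w | ∃ v : g, ⁅x, v⁆ = v ∧ w = (1 : LaurentSeries F) ⊗ₜ[F] ⁅f, v⁆}
        ∪ {w | ∃ v : g, ⁅x, v⁆ = v ∧ w = (1 : LaurentSeries F) ⊗ₜ[F] ⁅f, ⁅f, v⁆⁆ + ((2 : LaurentSeries F) * z) • ((1 : LaurentSeries F) ⊗ₜ[F] v)}),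
        ⁅p, q⁆ ∈ Submodule.span (LaurentSeries F) ({w | ∃ a : g, ⁅x, a⁆ = 0 ∧ ⁅f, a⁆ = 0 ∧ w = (1 : LaurentSeries F) ⊗ₜ[F] a}
        ∪ {w | ∃ v : g, ⁅x, v⁆ = v ∧ w = (1 : LaurentSeries F) ⊗ₜ[F] ⁅f, ⁅f, v⁆⁆ - ((2 : LaurentSeries F) * z) • ((1 : LaurentSeries F) ⊗ₜ[F] v)}) := by
      intro p hp q hq
      induction hq using Submodule.span_induction with
      | mem w hw => exact hgen p hp w hw
      | zero => rw [liezero]; exact Submodule.zero_mem _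
      | add y w _ _ hy hw => rw [lieadd]; exact Submodule.add_mem _ hy hw
      | smul t y _ hy => rw [liesmul]; exact Submodule.smul_mem _ t hy
    intro p hp q hq
    induction hp using Submodule.span_induction with
    | mem w hw => exact h1 w hw q hq
    | zero => rw [zerolie]; exact Submodule.zero_mem _
    | add y w _ _ hy hw => rw [addlie]; exact Submodule.add_mem _ hy hw
    | smul t y _ hy => rw [smullie]; exact Submodule.smul_mem _ t hy
  · -- the particular statements
    intro v v₁ hv hv₁
    exact ⟨⟨xg0g0 _ _ (xfv v hv) (xfv v₁ hv₁), L6 v v₁ hv hv₁⟩,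
      ⟨⁅v, ⁅f, v₁⁆⁆, xg1g0' v ⁅f, v₁⁆ hv (xfv v₁ hv₁), eqPR v v₁ hv hv₁⟩,
      memRR v v₁ hv hv₁⟩
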